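/- For every integer n ≥ 0, every real x > 0, and all reals ε > 0, ε_s > 0, the quadratic f_n satisfies f_n(1) = n·ε·ε_s/x². -/

import Mathlib

open Real Finset

/-- Modified spherical Bessel function of the second kind `k_n`, explicit closed form. -/
noncomputable def kBes (n : ℕ) (x : ℝ) : ℝ :=
  (Real.exp (-x) / x) *
    ∑ l ∈ Finset.range (n + 1),
      (Nat.factorial (n + l) : ℝ) /
        ((Nat.factorial l : ℝ) * (Nat.factorial (n - l) : ℝ) * (2 * x) ^ l)

/-- Modified spherical Bessel function of the first kind `i_n`, explicit closed form. -/
noncomputable def iBes (n : ℕ) (x : ℝ) : ℝ :=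
  (1 / (2 * x)) *
    (Real.exp x *
        ∑ l ∈ Finset.range (n + 1),
          (-1 : ℝ) ^ l * (Nat.factorial (n + l) : ℝ) /
            ((Nat.factorial l : ℝ) * (Nat.factorial (n - l) : ℝ) * (2 * x) ^ l)
      + (-1 : ℝ) ^ (n + 1) * Real.exp (-x) *
        ∑ l ∈ Finset.range (n + 1),
          (Nat.factorial (n + l) : ℝ) /
            ((Nat.factorial l : ℝ) * (Nat.factorial (n - l) : ℝ) * (2 * x) ^ l))

/-- The quadratic `f_n(λ)` from the spectral-radius proof. -/
noncomputable def bc (n l : ℕ) : ℝ :=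
  if l ≤ n then (Nat.factorial (n + l) : ℝ) /
    ((Nat.factorial l : ℝ) * (Nat.factorial (n - l) : ℝ) * 2 ^ l) else 0

lemma bc_zero' {n l : ℕ} (h : ¬ l ≤ n) : bc n l = 0 := by simp [bc, h]

lemma fac_ne (m : ℕ) : (Nat.factorial m : ℝ) ≠ 0 := Nat.cast_ne_zero.mpr (Nat.factorial_ne_zero _)

lemma bc_eq {n l : ℕ} (h : l ≤ n) : bc n l = (Nat.factorial (n + l) : ℝ) /
    ((Nat.factorial l : ℝ) * (Nat.factorial (n - l) : ℝ) * 2 ^ l) := if_pos h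

lemma fac_cast_succ (m : ℕ) : (Nat.factorial (m+1) : ℝ) = ((m:ℝ)+1) * Nat.factorial m := by
  rw [Nat.factorial_succ]; push_cast; ring

/-- Lem2 -/
lemma bc_rec2 (n l : ℕ) :
    bc (n+1) (l+1) = bc n (l+1) + ((n:ℝ) + l + 1) * bc n l := by
  rcases le_or_gt (l+1) n with h | h
  · obtain ⟨j, rfl⟩ : ∃ j, n = l + 1 + j := ⟨n - (l+1), by omega⟩
    rw [bc_eq (n := l+1+j+1) (l := l+1) (by omega), bc_eq (n := l+1+j) (l := l+1) (by omega),
      bc_eq (n := l+1+j) (l := l) (by omega)]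
    rw [show l + 1 + j + 1 + (l + 1) = (2*l+j+2)+1 by ring,
        show l + 1 + j + (l+1) = (2*l+j+1)+1 by ring,
        show l + 1 + j + l = (2*l+j+1) by ring,
        show l + 1 + j + 1 - (l + 1) = j + 1 by omega,
        show l + 1 + j - (l + 1) = j by omega,
        show l + 1 + j - l = j + 1 by omega,
        fac_cast_succ (2*l+j+2), fac_cast_succ (2*l+j+1),
        show (2*l+j+1) = (2*l+j)+1 from rfl, fac_cast_succ (2*l+j),
        fac_cast_succ j, fac_cast_succ l, pow_succ]
    push_cast
    field_simp
    ring
  · rcases eq_or_lt_of_le (Nat.lt_iff_add_one_le.mp h) with h' | h'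
    · obtain rfl : l = n := by omega
      rw [bc_eq (n := l+1) (l := l+1) le_rfl, bc_eq (n := l) (l := l) le_rfl,
        bc_zero' (n := l) (l := l+1) (by omega)]
      rw [show l + 1 + (l + 1) = (2*l+1)+1 by ring,
          show l + 1 - (l+1) = 0 by omega,
          show l - l = 0 by omega,
          show l + l = 2*l by ring,
          fac_cast_succ (2*l+1), show (2*l+1) = (2*l)+1 from rfl, fac_cast_succ (2*l),
          pow_succ, fac_cast_succ l]
      push_cast
      field_simp
      ring
    · rw [bc_zero' (by omega), bc_zero' (by omega), bc_zero' (by omega)]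
      ring

/-- Lem1 -/
lemma bc_rec1 (n l : ℕ) :
    bc (n+1) (l+1) = bc n (l+1) + ((n + 1 - l : ℕ) : ℝ) * bc (n+1) l := by
  rcases le_or_gt (l+1) n with h | h
  · obtain ⟨j, rfl⟩ : ∃ j, n = l + 1 + j := ⟨n - (l+1), by omega⟩
    rw [bc_eq (n := l+1+j+1) (l := l+1) (by omega), bc_eq (n := l+1+j) (l := l+1) (by omega),
      bc_eq (n := l+1+j+1) (l := l) (by omega)]
    rw [show l + 1 + j + 1 + (l + 1) = (2*l+j+2)+1 by ring,
        show l + 1 + j + (l+1) = (2*l+j+1)+1 by ring,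
        show l + 1 + j + 1 + l = (2*l+j+1)+1 by ring,
        show l + 1 + j + 1 - (l + 1) = j + 1 by omega,
        show l + 1 + j - (l + 1) = j by omega,
        show (l + 1 + j + 1 - l : ℕ) = j + 2 by omega,
        fac_cast_succ (2*l+j+2), fac_cast_succ (2*l+j+1),
        show (j+2) = (j+1)+1 from rfl, fac_cast_succ (j+1), fac_cast_succ j,
        fac_cast_succ l, pow_succ]
    push_cast
    field_simp
    ring
  · rcases eq_or_lt_of_le (Nat.lt_iff_add_one_le.mp h) with h' | h'
    · obtain rfl : l = n := by omega
      rw [bc_eq (n := l+1) (l := l+1) le_rfl, bc_eq (n := l+1) (l := l) (by omega),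
        bc_zero' (n := l) (l := l+1) (by omega)]
      rw [show l + 1 + (l + 1) = (2*l+1)+1 by ring,
          show l + 1 + l = 2*l+1 by ring,
          show l + 1 - (l+1) = 0 by omega,
          show (l + 1 - l : ℕ) = 1 by omega,
          fac_cast_succ (2*l+1), pow_succ, fac_cast_succ l]
      push_cast
      field_simp
      ring
    · rcases eq_or_lt_of_le (Nat.lt_iff_add_one_le.mp h') with h'' | h''
      · obtain rfl : l = n + 1 := by omega
        rw [bc_zero' (n := n+1) (l := n+2) (by omega), bc_zero' (n := n) (l := n+2) (by omega),
          show (n + 1 - (n+1) : ℕ) = 0 by omega]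
        simp
      · rw [bc_zero' (by omega), bc_zero' (by omega), bc_zero' (by omega)]
        ring

lemma bc_zeroth (n : ℕ) : bc n 0 = 1 := by
  simp [bc, Nat.factorial_ne_zero]

noncomputable def auxQ (n : ℕ) (x : ℝ) : ℝ := ∑ l ∈ range (n+1), bc n l * x^(n-l)
noncomputable def auxP (n : ℕ) (x : ℝ) : ℝ := ∑ l ∈ range (n+1), (-1)^l * bc n l * x^(n-l)
noncomputable def auxQd (n : ℕ) (x : ℝ) : ℝ :=
  ∑ l ∈ range (n+1), bc n l * ((n-l : ℕ) : ℝ) * x^(n-l-1)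
noncomputable def auxPd (n : ℕ) (x : ℝ) : ℝ :=
  ∑ l ∈ range (n+1), (-1)^l * bc n l * ((n-l : ℕ) : ℝ) * x^(n-l-1)

lemma auxQ_succ (n : ℕ) (x : ℝ) :
    auxQ (n+1) x = bc (n+1) 0 * x^(n+1) + ∑ l ∈ range (n+1), bc (n+1) (l+1) * x^(n-l) := by
  rw [auxQ, Finset.sum_range_succ']
  simp only [Nat.succ_sub_succ, Nat.sub_zero]
  rw [add_comm]

lemma auxP_succ (n : ℕ) (x : ℝ) :
    auxP (n+1) x = bc (n+1) 0 * x^(n+1)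
      + ∑ l ∈ range (n+1), (-1)^(l+1) * bc (n+1) (l+1) * x^(n-l) := by
  rw [auxP, Finset.sum_range_succ']
  simp only [Nat.succ_sub_succ, Nat.sub_zero, pow_zero, one_mul]
  rw [add_comm]

lemma auxQd_succ (n : ℕ) (x : ℝ) :
    auxQd (n+1) x = ∑ l ∈ range (n+1), bc (n+1) l * ((n+1-l : ℕ) : ℝ) * x^(n-l) := by
  rw [auxQd, Finset.sum_range_succ]
  have h0 : ((n + 1 - (n+1) : ℕ) : ℝ) = 0 := by norm_num
  rw [h0]
  simp only [mul_zero, zero_mul, add_zero]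
  exact Finset.sum_congr rfl fun l hl => by
    have : n + 1 - l - 1 = n - l := by omega
    rw [this]

lemma auxPd_succ (n : ℕ) (x : ℝ) :
    auxPd (n+1) x = ∑ l ∈ range (n+1), (-1)^l * bc (n+1) l * ((n+1-l : ℕ) : ℝ) * x^(n-l) := by
  rw [auxPd, Finset.sum_range_succ]
  have h0 : ((n + 1 - (n+1) : ℕ) : ℝ) = 0 := by norm_num
  rw [h0]
  simp only [mul_zero, zero_mul, add_zero]
  exact Finset.sum_congr rfl fun l hl => by
    have : n + 1 - l - 1 = n - l := by omega
    rw [this]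

lemma x_mul_auxQ (n : ℕ) (x : ℝ) :
    x * auxQ n x = bc n 0 * x^(n+1) + ∑ l ∈ range (n+1), bc n (l+1) * x^(n-l) := by
  have hz : ∑ l ∈ range (n+1), bc n (l+1) * x^(n-l)
      = ∑ l ∈ range n, bc n (l+1) * x^(n-l) := by
    rw [Finset.sum_range_succ, bc_zero' (by omega : ¬ n + 1 ≤ n), zero_mul, add_zero]
  have h1 : ∀ l ∈ range (n+1), x * (bc n l * x^(n-l)) = bc n l * x^(n+1-l) := by
    intro l hl
    rw [Finset.mem_range] at hl
    have h2 : n + 1 - l = (n - l) + 1 := by omega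
    rw [h2, pow_succ]
    ring
  rw [auxQ, Finset.mul_sum, Finset.sum_congr rfl h1, Finset.sum_range_succ']
  simp only [Nat.succ_sub_succ, Nat.sub_zero]
  rw [hz, add_comm]

lemma x_mul_auxP (n : ℕ) (x : ℝ) :
    x * auxP n x = bc n 0 * x^(n+1)
      + ∑ l ∈ range (n+1), (-1)^(l+1) * bc n (l+1) * x^(n-l) := by
  have hz : ∑ l ∈ range (n+1), (-1:ℝ)^(l+1) * bc n (l+1) * x^(n-l)
      = ∑ l ∈ range n, (-1:ℝ)^(l+1) * bc n (l+1) * x^(n-l) := by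
    rw [Finset.sum_range_succ, bc_zero' (by omega : ¬ n + 1 ≤ n), mul_zero, zero_mul, add_zero]
  have h1 : ∀ l ∈ range (n+1), x * ((-1:ℝ)^l * bc n l * x^(n-l))
      = (-1)^l * bc n l * x^(n+1-l) := by
    intro l hl
    rw [Finset.mem_range] at hl
    have h2 : n + 1 - l = (n - l) + 1 := by omega
    rw [h2, pow_succ]
    ring
  rw [auxP, Finset.mul_sum, Finset.sum_congr rfl h1, Finset.sum_range_succ']
  simp only [Nat.succ_sub_succ, Nat.sub_zero, pow_zero, one_mul]
  rw [hz, add_comm]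

lemma x_mul_auxQd (n : ℕ) (x : ℝ) :
    x * auxQd n x = ∑ l ∈ range (n+1), bc n l * ((n-l : ℕ) : ℝ) * x^(n-l) := by
  rw [auxQd, Finset.mul_sum]
  refine Finset.sum_congr rfl fun l hl => ?_
  rw [Finset.mem_range] at hl
  rcases eq_or_lt_of_le (Nat.lt_succ_iff.mp hl) with h | h
  · subst h; simp
  · obtain ⟨m, hm⟩ : ∃ m, n - l = m + 1 := ⟨n - l - 1, by omega⟩
    rw [hm]
    simp only [Nat.add_sub_cancel]
    rw [pow_succ]
    ring

lemma x_mul_auxPd (n : ℕ) (x : ℝ) :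
    x * auxPd n x = ∑ l ∈ range (n+1), (-1)^l * bc n l * ((n-l : ℕ) : ℝ) * x^(n-l) := by
  rw [auxPd, Finset.mul_sum]
  refine Finset.sum_congr rfl fun l hl => ?_
  rw [Finset.mem_range] at hl
  rcases eq_or_lt_of_le (Nat.lt_succ_iff.mp hl) with h | h
  · subst h; simp
  · obtain ⟨m, hm⟩ : ∃ m, n - l = m + 1 := ⟨n - l - 1, by omega⟩
    rw [hm]
    simp only [Nat.add_sub_cancel]
    rw [pow_succ]
    ring

lemma poly3 (n : ℕ) (x : ℝ) : auxQ (n+1) x - auxQd (n+1) x = x * auxQ n x := by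
  have hcomb : (∑ l ∈ range (n+1), bc (n+1) (l+1) * x^(n-l))
      - (∑ l ∈ range (n+1), bc (n+1) l * ((n+1-l : ℕ) : ℝ) * x^(n-l))
      = ∑ l ∈ range (n+1), bc n (l+1) * x^(n-l) := by
    rw [← Finset.sum_sub_distrib]
    exact Finset.sum_congr rfl fun l hl => by rw [bc_rec1 n l]; ring
  rw [auxQ_succ, auxQd_succ, x_mul_auxQ, bc_zeroth, bc_zeroth]
  linear_combination hcomb

lemma poly4 (n : ℕ) (x : ℝ) : auxP (n+1) x + auxPd (n+1) x = x * auxP n x := by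
  have hcomb : (∑ l ∈ range (n+1), (-1:ℝ)^(l+1) * bc (n+1) (l+1) * x^(n-l))
      + (∑ l ∈ range (n+1), (-1:ℝ)^l * bc (n+1) l * ((n+1-l : ℕ) : ℝ) * x^(n-l))
      = ∑ l ∈ range (n+1), (-1:ℝ)^(l+1) * bc n (l+1) * x^(n-l) := by
    rw [← Finset.sum_add_distrib]
    exact Finset.sum_congr rfl fun l hl => by rw [bc_rec1 n l]; ring
  rw [auxP_succ, auxPd_succ, x_mul_auxP, bc_zeroth, bc_zeroth]
  linear_combination hcomb

lemma poly1 (n : ℕ) (x : ℝ) :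
    auxQ (n+1) x = x * auxQ n x - x * auxQd n x + (2*(n:ℝ)+1) * auxQ n x := by
  have hcomb : (∑ l ∈ range (n+1), bc (n+1) (l+1) * x^(n-l))
      = ∑ l ∈ range (n+1), (bc n (l+1) * x^(n-l)
          - bc n l * ((n-l : ℕ) : ℝ) * x^(n-l) + (2*(n:ℝ)+1) * (bc n l * x^(n-l))) := by
    refine Finset.sum_congr rfl fun l hl => ?_
    rw [Finset.mem_range, Nat.lt_succ_iff] at hl
    rw [bc_rec2 n l, Nat.cast_sub hl]
    ring
  rw [auxQ_succ, x_mul_auxQ, x_mul_auxQd, hcomb, bc_zeroth, bc_zeroth]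
  rw [auxQ, Finset.mul_sum]
  rw [Finset.sum_add_distrib, Finset.sum_sub_distrib]
  ring

lemma poly2 (n : ℕ) (x : ℝ) :
    auxP (n+1) x = x * auxP n x + x * auxPd n x - (2*(n:ℝ)+1) * auxP n x := by
  have hcomb : (∑ l ∈ range (n+1), (-1:ℝ)^(l+1) * bc (n+1) (l+1) * x^(n-l))
      = ∑ l ∈ range (n+1), ((-1:ℝ)^(l+1) * bc n (l+1) * x^(n-l)
          + (-1)^l * bc n l * ((n-l : ℕ) : ℝ) * x^(n-l)
          - (2*(n:ℝ)+1) * ((-1)^l * bc n l * x^(n-l))) := by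
    refine Finset.sum_congr rfl fun l hl => ?_
    rw [Finset.mem_range, Nat.lt_succ_iff] at hl
    rw [bc_rec2 n l, Nat.cast_sub hl]
    ring
  rw [auxP_succ, x_mul_auxP, x_mul_auxPd, hcomb, bc_zeroth, bc_zeroth]
  rw [auxP, Finset.mul_sum]
  rw [Finset.sum_sub_distrib, Finset.sum_add_distrib]
  ring

/- three-term recurrences -/
lemma recQ (n : ℕ) (x : ℝ) :
    auxQ (n+2) x = x^2 * auxQ n x + (2*(n:ℝ)+3) * auxQ (n+1) x := by
  have h1 := poly1 (n+1) x
  have h3 := poly3 n x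
  push_cast at h1
  linear_combination h1 + x * h3

lemma recP (n : ℕ) (x : ℝ) :
    auxP (n+2) x = x^2 * auxP n x - (2*(n:ℝ)+3) * auxP (n+1) x := by
  have h2 := poly2 (n+1) x
  have h4 := poly4 n x
  push_cast at h2
  linear_combination h2 + x * h4

lemma bc10 : bc 1 0 = 1 := bc_zeroth 1
lemma bc11 : bc 1 1 = 1 := by
  rw [bc]
  norm_num [Nat.factorial]

/- cross identity (Wronskian at polynomial level) -/
lemma wpoly (n : ℕ) (x : ℝ) :
    auxP n x * auxQ (n+1) x + auxP (n+1) x * auxQ n x = 2 * x^(2*n+1) := by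
  induction n with
  | zero =>
    have hQ0 : auxQ 0 x = 1 := by simp [auxQ, bc_zeroth]
    have hP0 : auxP 0 x = 1 := by simp [auxP, bc_zeroth]
    have hQ1 : auxQ 1 x = x + 1 := by
      simp [auxQ, Finset.sum_range_succ, bc10, bc11]
    have hP1 : auxP 1 x = x - 1 := by
      simp [auxP, Finset.sum_range_succ, bc10, bc11]
      ring
    rw [hQ0, hP0, hQ1, hP1]
    ring
  | succ n ih =>
    have hq2 := recQ n x
    have hp2 := recP n x
    have hpow : x^(2*(n+1)+1) = x^2 * x^(2*n+1) := by
      rw [← pow_add]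
      congr 1
      omega
    rw [hpow]
    linear_combination auxP (n+1) x * hq2 + auxQ (n+1) x * hp2 + x^2 * ih

/- derivatives -/
lemma hasDerivAt_auxQ (n : ℕ) (x : ℝ) : HasDerivAt (auxQ n) (auxQd n x) x := by
  have h : HasDerivAt (fun y : ℝ => ∑ l ∈ range (n+1), bc n l * y^(n-l))
      (∑ l ∈ range (n+1), bc n l * (((n-l : ℕ)) * x^(n-l-1))) x := by
    refine HasDerivAt.fun_sum fun l hl => ?_
    exact (hasDerivAt_pow (n-l) x).const_mul (bc n l)
  convert h using 1
  · rfl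
  rw [auxQd]
  exact Finset.sum_congr rfl fun l hl => by ring

lemma hasDerivAt_auxP (n : ℕ) (x : ℝ) : HasDerivAt (auxP n) (auxPd n x) x := by
  have h : HasDerivAt (fun y : ℝ => ∑ l ∈ range (n+1), (-1:ℝ)^l * bc n l * y^(n-l))
      (∑ l ∈ range (n+1), (-1:ℝ)^l * bc n l * (((n-l : ℕ)) * x^(n-l-1))) x := by
    refine HasDerivAt.fun_sum fun l hl => ?_
    exact (hasDerivAt_pow (n-l) x).const_mul ((-1:ℝ)^l * bc n l)
  convert h using 1
  · rfl
  rw [auxPd]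
  exact Finset.sum_congr rfl fun l hl => by ring

noncomputable def auxG (n : ℕ) (x : ℝ) : ℝ :=
  (Real.exp x * auxP n x + (-1)^(n+1) * Real.exp (-x) * auxQ n x) / 2

lemma hasDerivAt_auxG (n : ℕ) (x : ℝ) :
    HasDerivAt (auxG n)
      ((Real.exp x * (auxP n x + auxPd n x)
        + (-1)^(n+1) * Real.exp (-x) * (auxQd n x - auxQ n x)) / 2) x := by
  have hexp : HasDerivAt (fun y : ℝ => Real.exp y) (Real.exp x) x := Real.hasDerivAt_exp x
  have hexpn : HasDerivAt (fun y : ℝ => Real.exp (-y)) (-Real.exp (-x)) x := by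
    exact ((Real.hasDerivAt_exp (-x)).comp x (hasDerivAt_neg x)).congr_deriv (by ring)
  have h1 : HasDerivAt (fun y => Real.exp y * auxP n y)
      (Real.exp x * auxP n x + Real.exp x * auxPd n x) x := by
    exact hexp.mul (hasDerivAt_auxP n x)
  have hexpn2 : HasDerivAt (fun y : ℝ => (-1:ℝ)^(n+1) * Real.exp (-y))
      ((-1:ℝ)^(n+1) * -Real.exp (-x)) x := hexpn.const_mul _
  have h2 : HasDerivAt (fun y => (-1:ℝ)^(n+1) * Real.exp (-y) * auxQ n y)
      ((-1:ℝ)^(n+1) * -Real.exp (-x) * auxQ n x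
        + (-1:ℝ)^(n+1) * Real.exp (-x) * auxQd n x) x :=
    hexpn2.mul (hasDerivAt_auxQ n x)
  have h3 := (h1.add h2).div_const 2
  refine h3.congr_deriv ?_
  ring

lemma hasDerivAt_auxG_succ (n : ℕ) (x : ℝ) :
    HasDerivAt (auxG (n+1)) (x * auxG n x) x := by
  have h := hasDerivAt_auxG (n+1) x
  have h4 := poly4 n x
  have hq : auxQd (n+1) x - auxQ (n+1) x = -(x * auxQ n x) := by
    have h3 := poly3 n x
    linarith
  convert h using 1
  rw [h4, hq, pow_succ, auxG]
  ring

/- values at 0 -/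
lemma auxQ_zero (n : ℕ) : auxQ n 0 = bc n n := by
  rw [auxQ, Finset.sum_eq_single n]
  · simp
  · intro l hl hne
    rw [Finset.mem_range] at hl
    have hd : n - l ≠ 0 := by omega
    rw [zero_pow hd, mul_zero]
  · intro h; exact absurd (Finset.self_mem_range_succ n) h

lemma auxP_zero (n : ℕ) : auxP n 0 = (-1)^n * bc n n := by
  rw [auxP, Finset.sum_eq_single n]
  · simp
  · intro l hl hne
    rw [Finset.mem_range] at hl
    have hd : n - l ≠ 0 := by omega
    rw [zero_pow hd, mul_zero]
  · intro h; exact absurd (Finset.self_mem_range_succ n) h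

lemma auxG_zero (n : ℕ) : auxG n 0 = 0 := by
  rw [auxG, auxP_zero, auxQ_zero, pow_succ]
  simp [Real.exp_zero]

lemma auxG_base (x : ℝ) : auxG 0 x = (Real.exp x - Real.exp (-x)) / 2 := by
  rw [auxG, auxP, auxQ]
  simp [Finset.sum_range_one, bc_zeroth]
  ring

lemma auxG_pos (n : ℕ) : ∀ x : ℝ, 0 < x → 0 < auxG n x := by
  induction n with
  | zero =>
    intro x hx
    rw [auxG_base]
    have : Real.exp (-x) < Real.exp x := Real.exp_lt_exp.mpr (by linarith)
    linarith
  | succ n ih =>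
    intro x hx
    have hdiff : Differentiable ℝ (auxG (n+1)) :=
      fun y => (hasDerivAt_auxG_succ n y).differentiableAt
    have mono : StrictMonoOn (auxG (n+1)) (Set.Ici 0) := by
      apply strictMonoOn_of_deriv_pos (convex_Ici 0) hdiff.continuous.continuousOn
      intro y hy
      rw [interior_Ici, Set.mem_Ioi] at hy
      rw [(hasDerivAt_auxG_succ n y).deriv]
      exact mul_pos hy (ih y hy)
    have := mono (Set.self_mem_Ici) (Set.mem_Ici.mpr hx.le) hx
    rwa [auxG_zero] at this


/- bridges -/
lemma sumQ_bridge (n : ℕ) {x : ℝ} (hx : x ≠ 0) :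
    (∑ l ∈ Finset.range (n + 1),
      (Nat.factorial (n + l) : ℝ) /
        ((Nat.factorial l : ℝ) * (Nat.factorial (n - l) : ℝ) * (2 * x) ^ l))
      = auxQ n x / x^n := by
  rw [auxQ, Finset.sum_div]
  refine Finset.sum_congr rfl fun l hl => ?_
  rw [Finset.mem_range, Nat.lt_succ_iff] at hl
  rw [bc, if_pos hl, mul_pow]
  have hpow : x^(n-l) * x^l = x^n := by rw [← pow_add, Nat.sub_add_cancel hl]
  have hfl : (Nat.factorial l : ℝ) ≠ 0 := Nat.cast_ne_zero.mpr (Nat.factorial_ne_zero l)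
  have hfnl : (Nat.factorial (n-l) : ℝ) ≠ 0 := Nat.cast_ne_zero.mpr (Nat.factorial_ne_zero (n-l))
  field_simp [hx, hfl, hfnl]
  rw [← hpow]
  ring

lemma sumP_bridge (n : ℕ) {x : ℝ} (hx : x ≠ 0) :
    (∑ l ∈ Finset.range (n + 1),
      (-1 : ℝ) ^ l * (Nat.factorial (n + l) : ℝ) /
        ((Nat.factorial l : ℝ) * (Nat.factorial (n - l) : ℝ) * (2 * x) ^ l))
      = auxP n x / x^n := by
  rw [auxP, Finset.sum_div]
  refine Finset.sum_congr rfl fun l hl => ?_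
  rw [Finset.mem_range, Nat.lt_succ_iff] at hl
  rw [bc, if_pos hl, mul_pow]
  have hpow : x^(n-l) * x^l = x^n := by rw [← pow_add, Nat.sub_add_cancel hl]
  have hfl : (Nat.factorial l : ℝ) ≠ 0 := Nat.cast_ne_zero.mpr (Nat.factorial_ne_zero l)
  have hfnl : (Nat.factorial (n-l) : ℝ) ≠ 0 := Nat.cast_ne_zero.mpr (Nat.factorial_ne_zero (n-l))
  field_simp [hx, hfl, hfnl]
  rw [← hpow]
  ring

lemma kBes_eq (n : ℕ) {x : ℝ} (hx : x ≠ 0) :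
    kBes n x = Real.exp (-x) * auxQ n x / x^(n+1) := by
  rw [kBes, sumQ_bridge n hx, pow_succ]
  field_simp

lemma iBes_eq (n : ℕ) {x : ℝ} (hx : x ≠ 0) :
    iBes n x = auxG n x / x^(n+1) := by
  rw [iBes, sumP_bridge n hx, sumQ_bridge n hx, auxG, pow_succ]
  field_simp
  ring

/- positivity -/
lemma bc_pos {n l : ℕ} (h : l ≤ n) : 0 < bc n l := by
  rw [bc, if_pos h]
  positivity

lemma auxQ_pos (n : ℕ) {x : ℝ} (hx : 0 < x) : 0 < auxQ n x := by
  rw [auxQ]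
  refine Finset.sum_pos (fun l hl => ?_) ⟨0, Finset.mem_range.mpr (by omega)⟩
  rw [Finset.mem_range, Nat.lt_succ_iff] at hl
  exact mul_pos (bc_pos hl) (pow_pos hx _)

lemma kBes_pos (n : ℕ) {x : ℝ} (hx : 0 < x) : 0 < kBes n x := by
  rw [kBes_eq n hx.ne']
  exact div_pos (mul_pos (Real.exp_pos _) (auxQ_pos n hx)) (pow_pos hx _)

lemma iBes_pos (n : ℕ) {x : ℝ} (hx : 0 < x) : 0 < iBes n x := by
  rw [iBes_eq n hx.ne']
  exact div_pos (auxG_pos n x hx) (pow_pos hx _)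

/- Wronskian -/
lemma wronskian (n : ℕ) {x : ℝ} (hx : 0 < x) :
    iBes n x * kBes (n+1) x + iBes (n+1) x * kBes n x = 1 / x^2 := by
  have hx' := hx.ne'
  rw [iBes_eq n hx', iBes_eq (n+1) hx', kBes_eq n hx', kBes_eq (n+1) hx']
  have key : auxG n x * auxQ (n+1) x + auxG (n+1) x * auxQ n x
      = Real.exp x * x^(2*n+1) := by
    have hW := wpoly n x
    rw [auxG, auxG, pow_succ ((-1:ℝ)) (n+1)]
    linear_combination (Real.exp x / 2) * hW
  have e1 : auxG n x / x^(n+1) * (Real.exp (-x) * auxQ (n+1) x / x^(n+1+1))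
      + auxG (n+1) x / x^(n+1+1) * (Real.exp (-x) * auxQ n x / x^(n+1))
      = Real.exp (-x) * (auxG n x * auxQ (n+1) x + auxG (n+1) x * auxQ n x)
        / x^(2*n+3) := by
    rw [show 2*n+3 = (n+1)+(n+2) by omega, pow_add]
    field_simp
    ring
  rw [e1, key, Real.exp_neg, show 2*n+3 = (2*n+1)+2 by omega, pow_add]
  field_simp [Real.exp_ne_zero]
  rw [pow_add x (2*n+1) 2, pow_add x (2*n) 1, pow_one]
  ring



noncomputable def fquad (n : ℕ) (x eps epss lam : ℝ) : ℝ :=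
  let A : ℝ := (n : ℝ) * (eps - epss) * iBes n x - x * epss * iBes (n + 1) x
  let B : ℝ := (n : ℝ) * (eps - epss) * kBes n x + x * epss * kBes (n + 1) x
  let C : ℝ := (n : ℝ) * iBes n x + x * iBes (n + 1) x
  let D : ℝ := (n : ℝ) * kBes n x - x * kBes (n + 1) x
  let F : ℝ := 2 * (n : ℝ) / x + iBes (n + 1) x / iBes n x - kBes (n + 1) x / kBes n x
  A ^ 2 * D * kBes n x * lam ^ 2 - A * B * x * iBes n x * kBes n x * F * lam
    + B ^ 2 * C * iBes n x

/-- For every integer `n ≥ 0`, every real `x > 0`, and all reals `ε > 0`, `ε_s > 0`,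
the quadratic `f_n` satisfies `f_n(1) = n·ε·ε_s/x²`. -/
theorem fquad_at_one (n : ℕ) (x : ℝ) (hx : 0 < x) (eps epss : ℝ)
    (heps : 0 < eps) (hepss : 0 < epss) :
    fquad n x eps epss 1 = (n : ℝ) * eps * epss / x ^ 2 := by
  have hi0 := iBes_pos n hx
  have hk0 := kBes_pos n hx
  have hw := wronskian n hx
  have main : fquad n x eps epss 1
      = (n : ℝ) * eps * epss * x^2
        * (iBes n x * kBes (n+1) x + iBes (n+1) x * kBes n x)^2 := by
    simp only [fquad]
    field_simp
    ring
  rw [main, hw]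
  field_simp
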